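/- If φ solves the backward-in-time reversed equation obtained by setting φ̂(t) = φ̃(-t) where φ̃ solves μφ̃'' = Aφ̃ - φ̃' - Q²DF(φ̃) with φ̃(0) = x, φ̃'(0) = -y, then φ̂ satisfies μφ̂''(t) = Aφ̂(t) + φ̂'(t) - Q²DF(φ̂(t)) with φ̂(0) = x, φ̂'(0) = y, and its action equals exactly I^μ_{-∞}(φ̂) = |(-A)^{1/2}Q^{-1}x|²_H + 2F(x) + μ|Q^{-1}y|²_H. -/

import Mathlib

open RealInnerProductSpace MeasureTheory Filter

/-- time reversal realizes the quasi-potential. If `φ̃` solves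
`μφ̃'' = Aφ̃ - φ̃' - Q²DF(φ̃)`, `φ̃(0) = x`, `φ̃'(0) = -y`, and (by the go-to-zero
lemma) `|(-A)^{1/2}Q⁻¹φ̃(t)| + |Q⁻¹φ̃'(t)| → 0` as `t → +∞` (so that also
`F(φ̃(t)) → F(0) = 0`), then `φ̂(t) := φ̃(-t)` satisfies
`μφ̂'' = Aφ̂ + φ̂' - Q²DF(φ̂)` with `φ̂(0) = x`, `φ̂'(0) = y`, and its action equals
`I^μ_{-∞}(φ̂) = |(-A)^{1/2}Q⁻¹x|² + 2F(x) + μ|Q⁻¹y|²`.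
(Operators abstracted as in Statement 11.) -/
theorem stmt16
    {H : Type*} [NormedAddCommGroup H] [InnerProductSpace ℝ H]
    (μ : ℝ) (hμ : 0 < μ)
    (A Qinv Q2inv Qsq sAQinv : H →ₗ[ℝ] H)
    (hAQ : ∀ u v, ⟪A u, Q2inv v⟫ = -⟪sAQinv u, sAQinv v⟫)
    (hQQ : ∀ u v, ⟪u, Q2inv v⟫ = ⟪Qinv u, Qinv v⟫)
    (hQsq : ∀ u v, ⟪Qsq u, Q2inv v⟫ = ⟪u, v⟫)
    (F : H → ℝ) (DF : H → H) (hF0 : F 0 = 0)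
    (φt φt' φt'' : ℝ → H) (x y : H)
    (hx : φt 0 = x) (hy : φt' 0 = -y)
    (hd1 : ∀ t, HasDerivAt φt (φt' t) t)
    (hd2 : ∀ t, HasDerivAt φt' (φt'' t) t)
    (heq : ∀ t ≥ (0:ℝ), μ • φt'' t = A (φt t) - φt' t - Qsq (DF (φt t)))
    (hdecay : Tendsto (fun t => ‖sAQinv (φt t)‖ + ‖Qinv (φt' t)‖) atTop (nhds 0))
    (hFlim : Tendsto (fun t => F (φt t)) atTop (nhds 0))
    (hder_sA : ∀ t, HasDerivAt (fun s => ‖sAQinv (φt s)‖ ^ 2)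
      (2 * ⟪sAQinv (φt t), sAQinv (φt' t)⟫) t)
    (hder_Q : ∀ t, HasDerivAt (fun s => ‖Qinv (φt' s)‖ ^ 2)
      (2 * ⟪Qinv (φt' t), Qinv (φt'' t)⟫) t)
    (hder_F : ∀ t, HasDerivAt (fun s => F (φt s)) (⟪DF (φt t), φt' t⟫) t)
    (hint : IntegrableOn (fun t => ‖Qinv (φt' (-t))‖ ^ 2) (Set.Iic (0:ℝ)) volume) :
    (∀ t, HasDerivAt (fun s => φt (-s)) (-(φt' (-t))) t) ∧
    (∀ t, HasDerivAt (fun s => -(φt' (-s))) (φt'' (-t)) t) ∧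
    (∀ t ≤ (0:ℝ), μ • φt'' (-t)
      = A (φt (-t)) + (-(φt' (-t))) - Qsq (DF (φt (-t)))) ∧
    φt (-(0:ℝ)) = x ∧ -(φt' (-(0:ℝ))) = y ∧
    (1 / 2) * ∫ t in Set.Iic (0:ℝ),
        ‖Qinv (μ • φt'' (-t) + (-(φt' (-t))) - A (φt (-t)) + Qsq (DF (φt (-t))))‖ ^ 2
      = ‖sAQinv x‖ ^ 2 + 2 * F x + μ * ‖Qinv y‖ ^ 2 := by
  -- derivative of the time-reversed path
  have hrev1 : ∀ t, HasDerivAt (fun s => φt (-s)) (-(φt' (-t))) t := by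
    intro t
    simpa [Function.comp_def] using (hd1 (-t)).scomp t (hasDerivAt_neg t)
  have hrev2 : ∀ t, HasDerivAt (fun s => -(φt' (-s))) (φt'' (-t)) t := by
    intro t
    simpa [Function.comp_def, Pi.neg_def] using ((hd2 (-t)).scomp t (hasDerivAt_neg t)).neg
  refine ⟨hrev1, hrev2, ?_, ?_, ?_, ?_⟩
  · intro t ht
    rw [heq (-t) (by linarith)]
    abel
  · simpa using hx
  · rw [neg_zero, hy, neg_neg]
  -- the energy functional
  set g : ℝ → ℝ := fun t => ‖sAQinv (φt t)‖ ^ 2 + 2 * F (φt t) + μ * ‖Qinv (φt' t)‖ ^ 2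
    with hgdef
  have hgd : ∀ t, HasDerivAt g
      (2 * ⟪sAQinv (φt t), sAQinv (φt' t)⟫ + 2 * ⟪DF (φt t), φt' t⟫
        + μ * (2 * ⟪Qinv (φt' t), Qinv (φt'' t)⟫)) t := by
    intro t
    exact ((hder_sA t).add ((hder_F t).const_mul 2)).add ((hder_Q t).const_mul μ)
  -- the derivative of g equals -2‖Qinv φ'‖² for t ≥ 0
  have key : ∀ t, 0 ≤ t →
      2 * ⟪sAQinv (φt t), sAQinv (φt' t)⟫ + 2 * ⟪DF (φt t), φt' t⟫
        + μ * (2 * ⟪Qinv (φt' t), Qinv (φt'' t)⟫) = -(2 * ‖Qinv (φt' t)‖ ^ 2) := by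
    intro t ht
    have h0 : ⟪μ • φt'' t, Q2inv (φt' t)⟫ = μ * ⟪Qinv (φt'' t), Qinv (φt' t)⟫ := by
      rw [hQQ]
      simp [_root_.map_smul, real_inner_smul_left]
    have h1 : μ * ⟪Qinv (φt'' t), Qinv (φt' t)⟫
        = -⟪sAQinv (φt t), sAQinv (φt' t)⟫ - ‖Qinv (φt' t)‖ ^ 2 - ⟪DF (φt t), φt' t⟫ := by
      rw [← h0, heq t ht, inner_sub_left, inner_sub_left, hAQ, hQsq, hQQ,
        real_inner_self_eq_norm_sq]
    have h2 : ⟪Qinv (φt' t), Qinv (φt'' t)⟫ = ⟪Qinv (φt'' t), Qinv (φt' t)⟫ :=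
      real_inner_comm _ _
    rw [h2]
    nlinarith [h1]
  -- g tends to 0 at +∞
  have hsA0 : Tendsto (fun t => ‖sAQinv (φt t)‖) atTop (nhds 0) := by
    refine tendsto_of_tendsto_of_tendsto_of_le_of_le tendsto_const_nhds hdecay
      (fun t => norm_nonneg _) (fun t => ?_)
    have := norm_nonneg (Qinv (φt' t)); linarith
  have hQ0 : Tendsto (fun t => ‖Qinv (φt' t)‖) atTop (nhds 0) := by
    refine tendsto_of_tendsto_of_tendsto_of_le_of_le tendsto_const_nhds hdecay
      (fun t => norm_nonneg _) (fun t => ?_)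
    have := norm_nonneg (sAQinv (φt t)); linarith
  have hgtop : Tendsto g atTop (nhds 0) := by
    have h1 : Tendsto (fun t => ‖sAQinv (φt t)‖ ^ 2) atTop (nhds 0) := by
      simpa using hsA0.pow 2
    have h2 : Tendsto (fun t => ‖Qinv (φt' t)‖ ^ 2) atTop (nhds 0) := by
      simpa using hQ0.pow 2
    have := (h1.add (hFlim.const_mul 2)).add (h2.const_mul μ)
    simpa [hgdef] using this
  -- FTC on (-∞, 0] for h(t) = g(-t)
  have hderivh : ∀ t ∈ Set.Iic (0:ℝ),
      HasDerivAt (fun s => g (-s)) (2 * ‖Qinv (φt' (-t))‖ ^ 2) t := by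
    intro t ht
    have h := (hgd (-t)).scomp t (hasDerivAt_neg t)
    have heqd : (-1 : ℝ) • (2 * ⟪sAQinv (φt (-t)), sAQinv (φt' (-t))⟫
        + 2 * ⟪DF (φt (-t)), φt' (-t)⟫
        + μ * (2 * ⟪Qinv (φt' (-t)), Qinv (φt'' (-t))⟫)) = 2 * ‖Qinv (φt' (-t))‖ ^ 2 := by
      rw [key (-t) (by simpa using ht)]
      simp
    rw [heqd] at h
    exact h
  have hbot : Tendsto (fun t => g (-t)) atBot (nhds 0) :=
    hgtop.comp tendsto_neg_atBot_atTop
  have hint2 : IntegrableOn (fun t => 2 * ‖Qinv (φt' (-t))‖ ^ 2) (Set.Iic (0:ℝ)) volume :=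
    hint.const_mul 2
  have hFTC : ∫ t in Set.Iic (0:ℝ), 2 * ‖Qinv (φt' (-t))‖ ^ 2 = g (-0) - 0 :=
    integral_Iic_of_hasDerivAt_of_tendsto' hderivh hint2 hbot
  have hg0 : g (-0) = ‖sAQinv x‖ ^ 2 + 2 * F x + μ * ‖Qinv y‖ ^ 2 := by
    simp [hgdef, hx, hy]
  -- identify the integrand
  have hcongr : ∫ t in Set.Iic (0:ℝ),
      ‖Qinv (μ • φt'' (-t) + (-(φt' (-t))) - A (φt (-t)) + Qsq (DF (φt (-t))))‖ ^ 2
      = ∫ t in Set.Iic (0:ℝ), 2 * (2 * ‖Qinv (φt' (-t))‖ ^ 2) := by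
    refine setIntegral_congr_fun measurableSet_Iic (fun t ht => ?_)
    have hv : μ • φt'' (-t) + (-(φt' (-t))) - A (φt (-t)) + Qsq (DF (φt (-t)))
        = (-2 : ℝ) • φt' (-t) := by
      rw [heq (-t) (by simpa using ht)]
      module
    rw [hv, _root_.map_smul, norm_smul]
    simp
    ring
  rw [hcongr, integral_const_mul, hFTC, hg0]
  ring
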